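/- arXiv:1701.04797 — 3 statements merged into one kernel-verified Lean document; each statement's English description precedes it below -/
import Mathlib

section
/- Let g be a function analytic in a neighborhood of the closed disk {|z| ≤ r} and let ζ ∈ ℂ with |ζ| < r. Suppose (Q_n)_{n} is a sequence of polynomials uniformly bounded on {|z| = r}, and P_n are polynomials with deg P_n < n such that the function Q_n(z)g(z)/z^{n+1} − (z−ζ)P_n(z)/z^{n+1} is analytic on {|z| < r'} for some r' > r. If Q_n g − (·−ζ)P_n has a zero of order at least n+1 at the origin, then Q_n(ζ)g(ζ) = (1/2πi) ∮_{|ω|=r} (ζ^{n+1}/ω^{n+1}) · Q_n(ω)g(ω)/(ω−ζ) dω, and consequently limsup_{n→∞} |Q_n(ζ)g(ζ)|^{1/n} ≤ |ζ|/r. -/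
set_option autoImplicit false
set_option maxHeartbeats 1000000

open Polynomial Filter Metric

theorem myCircleIntegral_sum {ι : Type*} (s : Finset ι) {f : ι → ℂ → ℂ} {c : ℂ} {R : ℝ}
    (h : ∀ i ∈ s, CircleIntegrable (f i) c R) :
    (∮ z in C(c, R), ∑ i ∈ s, f i z) = ∑ i ∈ s, ∮ z in C(c, R), f i z := by
  simp only [circleIntegral, Finset.smul_sum]
  exact intervalIntegral.integral_finset_sum fun i hi => (h i hi).out

theorem myCircleIntegral_add {f g : ℂ → ℂ} {c : ℂ} {R : ℝ}
    (hf : CircleIntegrable f c R) (hg : CircleIntegrable g c R) :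
    (∮ z in C(c, R), (f z + g z)) = (∮ z in C(c, R), f z) + ∮ z in C(c, R), g z := by
  simp only [circleIntegral, smul_add]
  exact intervalIntegral.integral_add hf.out hg.out

theorem myZpowInt (r : ℝ) (m : ℤ) (hm : m ≠ -1) :
    (∮ z in C((0:ℂ), r), z ^ m) = 0 := by
  simpa using circleIntegral.integral_sub_zpow_of_ne hm 0 0 r

/-- Key Cauchy-integral estimate: if `g` is analytic on a neighborhood of
the closed disk of radius `r`, `|ζ| < r`, the polynomials `Q n` are uniformly bounded on
the circle `|z| = r`, `deg (P n) < n`, and `Q n · g − (· − ζ) · P n` vanishes to order at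
least `n + 1` at the origin (equivalently, `(Q n (z) g z − (z − ζ) P n (z))/z^(n+1)` is
analytic), then `Q n (ζ) g (ζ)` equals the stated Cauchy integral over the circle of radius
`r`, and consequently `limsup_n |Q n (ζ) g (ζ)|^(1/n) ≤ |ζ| / r`. -/
theorem cauchy_integral_estimate (r : ℝ) (hr : 0 < r) (g : ℂ → ℂ)
    (hg : AnalyticOnNhd ℂ g (Metric.closedBall 0 r))
    (ζ : ℂ) (hζ : ‖ζ‖ < r)
    (Q P : ℕ → Polynomial ℂ)
    (hQbdd : ∃ C : ℝ, ∀ n, ∀ z : ℂ, ‖z‖ = r → ‖(Q n).eval z‖ ≤ C)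
    (hPdeg : ∀ n, (P n).degree < n)
    (hzero : ∀ n, ∃ h : ℂ → ℂ, AnalyticOnNhd ℂ h (Metric.closedBall 0 r) ∧
      ∀ z ∈ Metric.closedBall (0 : ℂ) r,
        (Q n).eval z * g z - (z - ζ) * (P n).eval z = z ^ (n + 1) * h z) :
    (∀ n, (Q n).eval ζ * g ζ =
      (2 * Real.pi * Complex.I)⁻¹ *
        ∮ ω in C(0, r), (ζ ^ (n + 1) / ω ^ (n + 1)) * ((Q n).eval ω * g ω) / (ω - ζ)) ∧
    Filter.limsup (fun n => ‖(Q n).eval ζ * g ζ‖ ^ ((1 : ℝ) / n)) atTop ≤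
      ‖ζ‖ / r := by
  have hζball : ζ ∈ ball (0:ℂ) r := by
    simpa [mem_ball_zero_iff] using hζ
  have hζcb : ζ ∈ closedBall (0:ℂ) r := ball_subset_closedBall hζball
  have habs : ∀ ω : ℂ, ω ∈ sphere (0:ℂ) r → ‖ω‖ = r := by
    intro ω hω
    simpa using (mem_sphere_zero_iff_norm.mp hω)
  have hω0 : ∀ ω : ℂ, ω ∈ sphere (0:ℂ) r → ω ≠ 0 := by
    intro ω hω h0
    rw [h0] at hω
    have := habs 0 hω
    simp at this
    exact hr.ne' this.symm
  have hωζ : ∀ ω : ℂ, ω ∈ sphere (0:ℂ) r → ω - ζ ≠ 0 := by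
    intro ω hω
    rw [sub_ne_zero]
    intro h
    rw [← h] at hζ
    rw [habs ω hω] at hζ
    exact lt_irrefl _ hζ
  -- the key identity
  have key : ∀ n, (Q n).eval ζ * g ζ =
      (2 * Real.pi * Complex.I)⁻¹ *
        ∮ ω in C(0, r), (ζ ^ (n + 1) / ω ^ (n + 1)) * ((Q n).eval ω * g ω) / (ω - ζ) := by
    intro n
    obtain ⟨h, hha, hhe⟩ := hzero n
    -- polynomial part integrates to zero
    have hPdeg' : (P n).natDegree ≤ n := by
      by_cases hP0 : P n = 0
      · simp [hP0]
      · exact Polynomial.natDegree_le_iff_degree_le.mpr (le_of_lt (hPdeg n))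
    have hIP : (∮ ω in C((0:ℂ), r), (P n).eval ω / ω ^ (n + 1)) = 0 := by
      have hcongr : Set.EqOn (fun ω : ℂ => (P n).eval ω / ω ^ (n + 1))
          (fun ω : ℂ => ∑ i ∈ Finset.range (n + 1), (P n).coeff i * ω ^ ((i : ℤ) - (n + 1)))
          (sphere 0 r) := by
        intro ω hω
        have hω0' := hω0 ω hω
        simp only
        rw [Polynomial.eval_eq_sum_range' (lt_of_le_of_lt hPdeg' (Nat.lt_succ_self n)),
          Finset.sum_div]
        refine Finset.sum_congr rfl fun i hi => ?_
        rw [mul_div_assoc]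
        congr 1
        rw [zpow_sub₀ hω0']
        norm_cast
      rw [circleIntegral.integral_congr hr.le hcongr]
      rw [myCircleIntegral_sum]
      · refine Finset.sum_eq_zero fun i hi => ?_
        rw [circleIntegral.integral_const_mul]
        by_cases hin : i = n
        · have : (P n).coeff i = 0 := by
            rw [hin]; exact Polynomial.coeff_eq_zero_of_degree_lt (hPdeg n)
          rw [this, zero_mul]
        · rw [myZpowInt, mul_zero]
          intro hc
          have : (i : ℤ) = n := by omega
          exact hin (by exact_mod_cast this)
      · intro i hi
        refine ContinuousOn.circleIntegrable hr.le ?_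
        exact continuousOn_const.mul ((continuousOn_id.zpow₀ _ fun a ha => Or.inl (hω0 a ha)))
    -- Cauchy integral for h
    have hIH : (∮ ω in C((0:ℂ), r), (ω - ζ)⁻¹ * h ω) = 2 * Real.pi * Complex.I * h ζ := by
      have := (hha.differentiableOn).circleIntegral_sub_inv_smul hζball
      simpa [smul_eq_mul] using this
    have hgc : ContinuousOn g (sphere (0:ℂ) r) :=
      hg.continuousOn.mono sphere_subset_closedBall
    have hhc : ContinuousOn h (sphere (0:ℂ) r) :=
      hha.continuousOn.mono sphere_subset_closedBall
    have hintA : CircleIntegrable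
        (fun ω : ℂ => ζ ^ (n + 1) * ((ω - ζ)⁻¹ * h ω)) 0 r := by
      refine ContinuousOn.circleIntegrable hr.le ?_
      exact continuousOn_const.mul
        (((continuousOn_id.sub continuousOn_const).inv₀ hωζ).mul hhc)
    have hintB : CircleIntegrable
        (fun ω : ℂ => ζ ^ (n + 1) * ((P n).eval ω / ω ^ (n + 1))) 0 r := by
      refine ContinuousOn.circleIntegrable hr.le ?_
      exact continuousOn_const.mul
        (((P n).continuous_aeval.continuousOn).div (continuousOn_pow _)
          fun a ha => pow_ne_zero _ (hω0 a ha))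
    have hcongr2 : Set.EqOn
        (fun ω : ℂ => (ζ ^ (n + 1) / ω ^ (n + 1)) * ((Q n).eval ω * g ω) / (ω - ζ))
        (fun ω : ℂ => ζ ^ (n + 1) * ((ω - ζ)⁻¹ * h ω)
          + ζ ^ (n + 1) * ((P n).eval ω / ω ^ (n + 1))) (sphere 0 r) := by
      intro ω hω
      have h1 := hω0 ω hω
      have h2 := hωζ ω hω
      have h3 : (Q n).eval ω * g ω = ω ^ (n + 1) * h ω + (ω - ζ) * (P n).eval ω := by
        have := hhe ω (sphere_subset_closedBall hω)
        linear_combination this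
      simp only
      rw [h3]
      field_simp
    have hq : (Q n).eval ζ * g ζ = ζ ^ (n + 1) * h ζ := by
      have := hhe ζ hζcb
      simpa using this
    rw [circleIntegral.integral_congr hr.le hcongr2,
      myCircleIntegral_add hintA hintB,
      circleIntegral.integral_const_mul, circleIntegral.integral_const_mul,
      hIH, hIP, mul_zero, add_zero, hq]
    have h2pi : (2 * Real.pi * Complex.I : ℂ) ≠ 0 := Complex.two_pi_I_ne_zero
    field_simp
  refine ⟨key, ?_⟩
  obtain ⟨C, hC⟩ := hQbdd
  obtain ⟨M, hM⟩ := (isCompact_sphere (0:ℂ) r).exists_bound_of_continuousOn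
    (hg.continuousOn.mono sphere_subset_closedBall)
  set a : ℝ := ‖ζ‖ / r with ha_def
  have ha0 : 0 ≤ a := div_nonneg (norm_nonneg _) hr.le
  have ha1 : a < 1 := (div_lt_one hr).mpr hζ
  set C' : ℝ := max C 0 with hC'_def
  set M' : ℝ := max M 0 with hM'_def
  have hC'0 : 0 ≤ C' := le_max_right _ _
  have hM'0 : 0 ≤ M' := le_max_right _ _
  have hrζ : 0 < r - ‖ζ‖ := by linarith
  set K : ℝ := r * (C' * M' / (r - ‖ζ‖)) with hK_def
  have hK0 : 0 ≤ K := by positivity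
  have habs2 : ‖(2 * Real.pi * Complex.I : ℂ)⁻¹‖ = (2 * Real.pi)⁻¹ := by
    rw [norm_inv, norm_mul, norm_mul, Complex.norm_I, mul_one, Complex.norm_two,
      Complex.norm_real, Real.norm_of_nonneg Real.pi_pos.le]
  have hbound : ∀ n, ‖(Q n).eval ζ * g ζ‖ ≤ K * a ^ (n + 1) := by
    intro n
    have hpt : ∀ ω ∈ sphere (0:ℂ) r,
        ‖(ζ ^ (n + 1) / ω ^ (n + 1)) * ((Q n).eval ω * g ω) / (ω - ζ)‖ ≤
          a ^ (n + 1) * (C' * M') / (r - ‖ζ‖) := by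
      intro ω hω
      have hωr := habs ω hω
      rw [norm_div, norm_mul, norm_div, norm_pow, norm_pow, norm_mul, hωr]
      have hnum : ‖ζ‖ ^ (n+1) / r ^ (n+1) *
          (‖(Q n).eval ω‖ * ‖g ω‖) ≤ a ^ (n + 1) * (C' * M') := by
        rw [ha_def, div_pow]
        refine mul_le_mul le_rfl ?_ (by positivity) (by positivity)
        refine mul_le_mul (le_trans (hC n ω hωr) (le_max_left _ _))
          (le_trans ?_ (le_max_left _ _)) (norm_nonneg _) hC'0
        simpa using hM ω hω
      have hden : r - ‖ζ‖ ≤ ‖ω - ζ‖ := by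
        have := norm_sub_norm_le ω ζ
        rw [hωr] at this
        exact this
      exact div_le_div₀ (by positivity) hnum hrζ hden
    have hInt := circleIntegral.norm_integral_le_of_norm_le_const hr.le hpt
    calc ‖(Q n).eval ζ * g ζ‖
        = (2 * Real.pi)⁻¹ * ‖∮ ω in C(0, r),
            (ζ ^ (n + 1) / ω ^ (n + 1)) * ((Q n).eval ω * g ω) / (ω - ζ)‖ := by
          rw [key n, norm_mul, habs2]
      _ ≤ (2 * Real.pi)⁻¹ *
            (2 * Real.pi * r * (a ^ (n + 1) * (C' * M') / (r - ‖ζ‖))) := by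
          refine mul_le_mul_of_nonneg_left hInt (by positivity)
      _ = K * a ^ (n + 1) := by
          rw [hK_def]
          field_simp
  set K' : ℝ := max K 1 with hK'_def
  have hK'1 : (1:ℝ) ≤ K' := le_max_right _ _
  have hK'0 : (0:ℝ) < K' := lt_of_lt_of_le zero_lt_one hK'1
  have hev : ∀ n : ℕ, 1 ≤ n → ‖(Q n).eval ζ * g ζ‖ ^ ((1:ℝ)/n) ≤
      K' ^ ((1:ℝ)/n) * a := by
    intro n hn
    have hn0 : (n:ℝ) ≠ 0 := Nat.cast_ne_zero.mpr (by omega)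
    have h2 : ‖(Q n).eval ζ * g ζ‖ ≤ K' * a ^ n := by
      refine le_trans (hbound n) ?_
      exact mul_le_mul (le_max_left _ _)
        (pow_le_pow_of_le_one ha0 ha1.le (Nat.le_succ n)) (by positivity) hK'0.le
    calc ‖(Q n).eval ζ * g ζ‖ ^ ((1:ℝ)/n)
        ≤ (K' * a ^ n) ^ ((1:ℝ)/n) :=
          Real.rpow_le_rpow (norm_nonneg _) h2 (by positivity)
      _ = K' ^ ((1:ℝ)/n) * a := by
          rw [Real.mul_rpow hK'0.le (pow_nonneg ha0 _), ← Real.rpow_natCast a n,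
            ← Real.rpow_mul ha0, mul_one_div_cancel hn0, Real.rpow_one]
  have htend : Tendsto (fun n : ℕ => K' ^ ((1:ℝ)/n) * a) atTop (nhds a) := by
    have h1 : Tendsto (fun n : ℕ => (1:ℝ)/n) atTop (nhds 0) :=
      tendsto_one_div_atTop_nhds_zero_nat
    have h2 : Tendsto (fun n : ℕ => K' ^ ((1:ℝ)/n)) atTop (nhds 1) := by
      have := (Real.continuousAt_const_rpow (b := (0:ℝ)) hK'0.ne').tendsto.comp h1
      simpa [Function.comp_def, Real.rpow_zero] using this
    simpa using h2.mul_const a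
  have hlimsup := Filter.limsup_le_limsup (Filter.eventually_atTop.mpr ⟨1, hev⟩)
    (Filter.isCoboundedUnder_le_of_le atTop
      (fun n => Real.rpow_nonneg (norm_nonneg _) _))
    htend.isBoundedUnder_le
  rw [htend.limsup_eq] at hlimsup
  exact hlimsup
end

section
/- Let (Q_n)_n be a sequence of polynomials of degree at most M, normalized so that the coefficients of each Q_n have absolute values summing to 1, and fix ζ ∈ ℂ and an integer τ ≥ 1. Suppose limsup_{n→∞} |Q_n^{(s)}(ζ)|^{1/n} < 1 for each s = 0, 1, ..., τ−1. Then every uniform limit Q of a subsequence of (Q_n) on compact sets is a nonzero polynomial with a zero of multiplicity at least τ at ζ. -/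
set_option autoImplicit false

open Polynomial Filter Finset


lemma aux_eval_bound (M s : ℕ) (ζ : ℂ) (p : Polynomial ℂ) (hdeg : p.natDegree ≤ M)
    (hc : ∀ k, ‖p.coeff k‖ ≤ 1) :
    ‖((derivative)^[s] p).eval ζ‖ ≤
      (M + 1) * ((M + s) ^ s : ℕ) * (max 1 (‖ζ‖)) ^ M := by
  have hd : ((derivative)^[s] p).natDegree < M + 1 :=
    lt_of_le_of_lt (le_trans (natDegree_iterate_derivative p s) (by omega)) (lt_add_one M)
  rw [Polynomial.eval_eq_sum_range' hd]
  calc ‖∑ i ∈ range (M + 1), ((derivative)^[s] p).coeff i * ζ ^ i‖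
      ≤ ∑ i ∈ range (M + 1), ‖((derivative)^[s] p).coeff i * ζ ^ i‖ :=
        norm_sum_le _ _
    _ ≤ ∑ _i ∈ range (M + 1), ((M + s) ^ s : ℕ) * (max 1 (‖ζ‖)) ^ M := by
        apply Finset.sum_le_sum
        intro i hi
        have hi' : i ≤ M := by simpa [Nat.lt_succ_iff] using hi
        rw [norm_mul, norm_pow]
        have h1 : ‖((derivative)^[s] p).coeff i‖ ≤ ((M + s) ^ s : ℕ) := by
          rw [coeff_iterate_derivative, nsmul_eq_mul, norm_mul, Complex.norm_natCast]
          calc ((i + s).descFactorial s : ℝ) * ‖p.coeff (i + s)‖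
              ≤ ((i + s).descFactorial s : ℝ) * 1 := by
                exact mul_le_mul_of_nonneg_left (hc _) (by positivity)
            _ ≤ ((M + s) ^ s : ℕ) := by
                rw [mul_one]
                exact_mod_cast le_trans (Nat.descFactorial_le_pow _ _)
                  (Nat.pow_le_pow_left (by omega) s)
        have h2 : ‖ζ‖ ^ i ≤ (max 1 (‖ζ‖)) ^ M :=
          le_trans (pow_le_pow_left₀ (norm_nonneg _) (le_max_right _ _) i)
            (pow_le_pow_right₀ (le_max_left _ _) hi')
        exact mul_le_mul h1 h2 (by positivity) (by positivity)
    _ = (M + 1) * ((M + s) ^ s : ℕ) * (max 1 (‖ζ‖)) ^ M := by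
        rw [Finset.sum_const, Finset.card_range, nsmul_eq_mul]
        push_cast; ring

lemma aux_tendsto_zero (a : ℕ → ℝ) (ha : ∀ n, 0 ≤ a n) (K : ℝ) (hK : ∀ n, a n ≤ K)
    (h : limsup (fun n => a n ^ ((1 : ℝ) / n)) atTop < 1) :
    Tendsto a atTop (nhds 0) := by
  set u := fun n => a n ^ ((1 : ℝ) / n) with hu
  have hub : ∀ n, u n ≤ max K 1 := by
    intro n
    rcases Nat.eq_zero_or_pos n with h0 | h0
    · simp [hu, h0, le_max_right]
    · calc u n ≤ (max K 1) ^ ((1 : ℝ) / n) :=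
            Real.rpow_le_rpow (ha n) ((hK n).trans (le_max_left _ _)) (by positivity)
        _ ≤ (max K 1) ^ (1 : ℝ) := by
            apply Real.rpow_le_rpow_of_exponent_le (le_max_right _ _)
            rw [div_le_one (by exact_mod_cast h0)]
            exact_mod_cast h0
        _ = max K 1 := Real.rpow_one _
  have hbdd : IsBoundedUnder (· ≤ ·) atTop u := Filter.isBoundedUnder_of ⟨max K 1, hub⟩
  obtain ⟨c, hc1, hc2⟩ := exists_between (max_lt h one_pos)
  have hc0 : 0 < c := lt_of_le_of_lt (le_max_right _ _) hc1
  have hev : ∀ᶠ n in atTop, u n < c :=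
    eventually_lt_of_limsup_lt (lt_of_le_of_lt (le_max_left _ _) hc1) hbdd
  have key : ∀ᶠ n in atTop, a n ≤ c ^ n := by
    filter_upwards [hev, eventually_ge_atTop 1] with n hn hn1
    have hn0 : (n : ℝ) ≠ 0 := by exact_mod_cast Nat.one_le_iff_ne_zero.mp hn1
    have heq : a n = (u n) ^ n := by
      rw [hu, ← Real.rpow_natCast (a n ^ ((1 : ℝ) / n)) n, ← Real.rpow_mul (ha n),
        one_div, inv_mul_cancel₀ hn0, Real.rpow_one]
    rw [heq]
    exact pow_le_pow_left₀ (Real.rpow_nonneg (ha n) _) hn.le n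
  exact squeeze_zero' (Filter.Eventually.of_forall ha) key
    (tendsto_pow_atTop_nhds_zero_of_lt_one hc0.le hc2)

/-- If `(Q n)` are polynomials of degree at most `M`, normalized so that the
absolute values of the coefficients sum to `1`, and for each `s < τ` the derivatives satisfy
`limsup_n |Q n ^ (s) (ζ)|^(1/n) < 1`, then every locally uniform limit `QL` of a subsequence
of `(Q n)` is a nonzero polynomial divisible by `(X − ζ)^τ`, i.e. has a zero of multiplicity
at least `τ` at `ζ`. -/
theorem limit_of_normalized_polynomials_has_zero (M : ℕ) (Q : ℕ → Polynomial ℂ)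
    (hdeg : ∀ n, (Q n).natDegree ≤ M)
    (hnorm : ∀ n, ∑ k ∈ Finset.range (M + 1), ‖(Q n).coeff k‖ = 1)
    (ζ : ℂ) (τ : ℕ) (hτ : 1 ≤ τ)
    (hder : ∀ s < τ,
      Filter.limsup
        (fun n => ‖((Polynomial.derivative)^[s] (Q n)).eval ζ‖ ^ ((1 : ℝ) / n))
        atTop < 1)
    (φ : ℕ → ℕ) (hφ : StrictMono φ) (QL : Polynomial ℂ)
    (hlim : TendstoLocallyUniformly (fun n z => (Q (φ n)).eval z) QL.eval atTop) :
    QL ≠ 0 ∧ (Polynomial.X - Polynomial.C ζ) ^ τ ∣ QL := by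
  -- locally uniform convergence of all iterated derivatives
  have hconv : ∀ s, TendstoLocallyUniformlyOn
      (fun n z => ((derivative)^[s] (Q (φ n))).eval z)
      (fun z => ((derivative)^[s] QL).eval z) atTop Set.univ := by
    intro s
    induction s with
    | zero => simpa using tendstoLocallyUniformlyOn_univ.mpr hlim
    | succ s ih =>
      have hdiff : ∀ᶠ n in atTop,
          DifferentiableOn ℂ (fun z => ((derivative)^[s] (Q (φ n))).eval z) Set.univ :=
        Filter.Eventually.of_forall fun n =>
          ((derivative)^[s] (Q (φ n))).differentiable.differentiableOn
      have key := ih.deriv hdiff isOpen_univ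
      have heq : ∀ p : Polynomial ℂ,
          deriv (fun z => p.eval z) = fun z => (derivative p).eval z :=
        fun p => funext fun z => Polynomial.deriv (p := p)
      simp only [Function.comp_def, heq, Function.iterate_succ_apply'] at key ⊢
      exact key
  have hpt : ∀ s (z : ℂ), Tendsto (fun n => ((derivative)^[s] (Q (φ n))).eval z)
      atTop (nhds (((derivative)^[s] QL).eval z)) :=
    fun s z => (hconv s).tendsto_at (Set.mem_univ z)
  -- coefficient bound
  have hcoeff : ∀ n k, ‖(Q n).coeff k‖ ≤ 1 := by
    intro n k
    rcases le_or_gt k M with h | h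
    · rw [← hnorm n]
      exact Finset.single_le_sum (f := fun k => ‖(Q n).coeff k‖)
        (fun i _ => norm_nonneg _) (Finset.mem_range.mpr (by omega))
    · rw [Polynomial.coeff_eq_zero_of_natDegree_lt (lt_of_le_of_lt (hdeg n) h)]
      simp
  -- derivatives of the limit vanish at ζ
  have hroot : ∀ s < τ, ((derivative)^[s] QL).eval ζ = 0 := by
    intro s hs
    have h0 : Tendsto (fun n => ‖((derivative)^[s] (Q n)).eval ζ‖)
        atTop (nhds 0) :=
      aux_tendsto_zero _ (fun n => norm_nonneg _)
        ((M + 1) * ((M + s) ^ s : ℕ) * (max 1 (‖ζ‖)) ^ M)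
        (fun n => aux_eval_bound M s ζ (Q n) (hdeg n) (hcoeff n)) (hder s hs)
    have h1 : Tendsto (fun n => ‖((derivative)^[s] (Q (φ n))).eval ζ‖)
        atTop (nhds 0) := h0.comp hφ.tendsto_atTop
    have h2 : Tendsto (fun n => ‖((derivative)^[s] (Q (φ n))).eval ζ‖)
        atTop (nhds (‖((derivative)^[s] QL).eval ζ‖)) :=
      (continuous_norm.tendsto _).comp (hpt s ζ)
    have := tendsto_nhds_unique h2 h1
    exact norm_eq_zero.mp this
  -- the limit is nonzero
  have hQL : QL ≠ 0 := by
    have hsum : Tendsto (fun n => ∑ k ∈ Finset.range (M + 1),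
        ‖(Q (φ n)).coeff k‖) atTop
        (nhds (∑ k ∈ Finset.range (M + 1), ‖QL.coeff k‖)) := by
      apply tendsto_finset_sum
      intro k _
      have hev : ∀ p : Polynomial ℂ,
          ((derivative)^[k] p).eval 0 = (k.factorial : ℂ) * p.coeff k := by
        intro p
        rw [← Polynomial.coeff_zero_eq_eval_zero, Polynomial.coeff_iterate_derivative,
          nsmul_eq_mul, zero_add, Nat.descFactorial_self]
      have h3 := hpt k 0
      simp only [hev] at h3
      have hk0 : (k.factorial : ℂ) ≠ 0 := by
        exact_mod_cast Nat.cast_ne_zero.mpr k.factorial_ne_zero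
      have hck : Tendsto (fun n => (Q (φ n)).coeff k) atTop (nhds (QL.coeff k)) := by
        have h4 := h3.const_mul ((k.factorial : ℂ)⁻¹)
        simpa [← mul_assoc, inv_mul_cancel₀ hk0] using h4
      exact (continuous_norm.tendsto _).comp hck
    have h5 : Tendsto (fun _ : ℕ => (1 : ℝ)) atTop
        (nhds (∑ k ∈ Finset.range (M + 1), ‖QL.coeff k‖)) := by
      simpa [hnorm] using hsum
    have h6 : ∑ k ∈ Finset.range (M + 1), ‖QL.coeff k‖ = 1 :=
      tendsto_nhds_unique h5 tendsto_const_nhds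
    intro h
    rw [h] at h6
    simp at h6
  refine ⟨hQL, ?_⟩
  have hlt : τ - 1 < QL.rootMultiplicity ζ :=
    Polynomial.lt_rootMultiplicity_of_isRoot_iterate_derivative hQL
      (fun m hm => hroot m (by omega))
  exact dvd_trans (pow_dvd_pow _ (by omega)) (QL.pow_rootMultiplicity_dvd ζ)
end

section
/- Let f = (f_1,...,f_d) be a vector of formal power series and m ∈ ℕ^d a multi-index. Then f has at most |m| = m_1 + ... + m_d system poles with respect to m, counting orders. -/
set_option autoImplicit false

open Polynomial PowerSeries Filter Metric Finset

/-- `G` has a pole of exact order `s` at `ζ`. -/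
def HasPoleOfOrder (G : ℂ → ℂ) (ζ : ℂ) (s : ℕ) : Prop :=
  ∃ H : ℂ → ℂ, AnalyticAt ℂ H ζ ∧ H ζ ≠ 0 ∧
    ∀ᶠ w in nhdsWithin ζ {ζ}ᶜ, G w = H w / (w - ζ) ^ s

/-- `G` represents the formal power series `F` near the origin. -/
def RepresentsNearZero (F : PowerSeries ℂ) (G : ℂ → ℂ) : Prop :=
  ∀ᶠ z in nhds (0 : ℂ), HasSum (fun n : ℕ => PowerSeries.coeff n F * z ^ n) (G z)

/-- There is a polynomial combination `Σ p_k f_k`, `deg p_k < m_k`, analytic on a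
neighborhood of the closed disk `{|z| ≤ |ζ|}` except for a pole of exact order `s`
at `ζ`. -/
def HasComboWithPole (d : ℕ) (f : Fin d → PowerSeries ℂ) (m : Fin d → ℕ)
    (ζ : ℂ) (s : ℕ) : Prop :=
  ∃ (p : Fin d → Polynomial ℂ) (G : ℂ → ℂ),
    (∀ k, (p k).degree < (m k : WithBot ℕ)) ∧
    AnalyticOnNhd ℂ G (Metric.closedBall 0 ‖ζ‖ \ {ζ}) ∧
    HasPoleOfOrder G ζ s ∧
    RepresentsNearZero (∑ k, (p k : PowerSeries ℂ) * f k) G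

/-- `ζ ∈ ℂ*` is a system pole of order `τ` of `f` with respect to `m`:
`τ` is the largest positive integer such that for each `s = 1, …, τ` there is a polynomial
combination as above with a pole of exact order `s` at `ζ`. -/
def IsSystemPole (d : ℕ) (f : Fin d → PowerSeries ℂ) (m : Fin d → ℕ)
    (ζ : ℂ) (τ : ℕ) : Prop :=
  ζ ≠ 0 ∧ 1 ≤ τ ∧ (∀ s, 1 ≤ s → s ≤ τ → HasComboWithPole d f m ζ s) ∧
    ¬ HasComboWithPole d f m ζ (τ + 1)

/-- Coercion from polynomials to power series, as a `ℂ`-linear map. -/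
noncomputable def polyToPS : Polynomial ℂ →ₗ[ℂ] PowerSeries ℂ where
  toFun p := (p : PowerSeries ℂ)
  map_add' p q := by
    ext n
    simp [Polynomial.coeff_coe]
  map_smul' c p := by
    ext n
    simp [Polynomial.coeff_coe, Polynomial.coeff_smul, PowerSeries.coeff_smul, smul_eq_mul]

theorem polyToPS_coeff (p : Polynomial ℂ) (n : ℕ) :
    PowerSeries.coeff n (polyToPS p) = p.coeff n := Polynomial.coeff_coe p n

instance degreeLT_finite (n : ℕ) : Module.Finite ℂ (Polynomial.degreeLT ℂ n) :=
  Module.Finite.equiv (Polynomial.degreeLTEquiv ℂ n).symm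

/-- A system `f` of `d` formal power series has at most
`|m| = m_1 + ⋯ + m_d` system poles with respect to `m ∈ ℕ^d`, counting orders. -/
theorem card_system_poles_le (d : ℕ) (f : Fin d → PowerSeries ℂ) (m : Fin d → ℕ)
    (hm : ∀ k, 1 ≤ m k) (S : Finset ℂ) (τ : ℂ → ℕ)
    (hS : ∀ ζ ∈ S, IsSystemPole d f m ζ (τ ζ)) :
    ∑ ζ ∈ S, τ ζ ≤ ∑ k, m k := by
  classical
  set T : Finset ((_ : ℂ) × ℕ) := S.sigma (fun ζ => Finset.Icc 1 (τ ζ)) with hT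
  have hmemT : ∀ i : T, (i : (_ : ℂ) × ℕ).1 ∈ S ∧
      1 ≤ (i : (_ : ℂ) × ℕ).2 ∧ (i : (_ : ℂ) × ℕ).2 ≤ τ (i : (_ : ℂ) × ℕ).1 := by
    intro i
    have h2 : (↑i : (_ : ℂ) × ℕ) ∈ S.sigma (fun ζ => Finset.Icc 1 (τ ζ)) := i.2
    rw [Finset.mem_sigma, Finset.mem_Icc] at h2
    exact ⟨h2.1, h2.2.1, h2.2.2⟩
  have hcombo : ∀ i : T,
      HasComboWithPole d f m (i : (_ : ℂ) × ℕ).1 (i : (_ : ℂ) × ℕ).2 := by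
    intro i
    obtain ⟨hζ, hs1, hs2⟩ := hmemT i
    exact (hS _ hζ).2.2.1 _ hs1 hs2
  choose p G hdeg hana hpole hrep using hcombo
  -- the vectors in `V`
  set v : T → (∀ k : Fin d, Polynomial.degreeLT ℂ (m k)) :=
    fun i k => ⟨p i k, Polynomial.mem_degreeLT.mpr (hdeg i k)⟩ with hv
  -- linear independence
  have hli : LinearIndependent ℂ v := by
    rw [Fintype.linearIndependent_iff]
    intro g hg
    by_contra hne
    push_neg at hne
    obtain ⟨i0, hi0⟩ := hne
    set A : Finset T := Finset.univ.filter (fun i => g i ≠ 0) with hA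
    have hAne : A.Nonempty := ⟨i0, by simp [hA, hi0]⟩
    -- choose ζ0 of minimal modulus among active indices
    obtain ⟨imin, himinA, himin⟩ :=
      A.exists_min_image (fun i => ‖(i : (_ : ℂ) × ℕ).1‖) hAne
    set ζ0 : ℂ := (imin : (_ : ℂ) × ℕ).1 with hζ0
    set r : ℝ := ‖ζ0‖ with hr
    have hζ0S : ζ0 ∈ S := (hmemT imin).1
    have hζ0ne : ζ0 ≠ 0 := (hS _ hζ0S).1
    have hrpos : 0 < r := by
      rw [hr]; exact norm_pos_iff.mpr hζ0ne
    -- choose maximal s among active indices at ζ0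
    set A0 : Finset T := A.filter (fun i => (i : (_ : ℂ) × ℕ).1 = ζ0) with hA0
    have hA0ne : A0.Nonempty := ⟨imin, by simp [hA0, himinA, hζ0]⟩
    obtain ⟨istar, histarA0, histar⟩ :=
      A0.exists_max_image (fun i => (i : (_ : ℂ) × ℕ).2) hA0ne
    have histarA : istar ∈ A := (Finset.mem_filter.mp histarA0).1
    have hζstar : (istar : (_ : ℂ) × ℕ).1 = ζ0 := (Finset.mem_filter.mp histarA0).2
    set sstar : ℕ := (istar : (_ : ℂ) × ℕ).2 with hsstar
    have hsstar1 : 1 ≤ sstar := (hmemT istar).2.1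
    have hgstar : g istar ≠ 0 := (Finset.mem_filter.mp histarA).2
    -- the polynomial relations
    have hpoly : ∀ k, ∑ i ∈ A, g i • p i k = 0 := by
      intro k
      have h1 : ∑ i : T, g i • p i k = 0 := by
        have hL := congrArg
          ((Polynomial.degreeLT ℂ (m k)).subtype.comp (LinearMap.proj k)) hg
        simpa [map_sum, map_smul, hv] using hL
      rw [← h1, hA]
      exact Finset.sum_filter_of_ne (fun x _ h h0 => h (by rw [h0, zero_smul]))
    -- the power series relation
    have hPS : ∑ i ∈ A, g i • (∑ k, ((p i k : Polynomial ℂ) : PowerSeries ℂ) * f k) = 0 := by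
      have heq2 : ∑ i ∈ A, g i • (∑ k, ((p i k : Polynomial ℂ) : PowerSeries ℂ) * f k)
          = ∑ k, (polyToPS (∑ i ∈ A, g i • p i k)) * f k := by
        calc ∑ i ∈ A, g i • (∑ k, ((p i k : Polynomial ℂ) : PowerSeries ℂ) * f k)
            = ∑ i ∈ A, ∑ k, g i • (((p i k : Polynomial ℂ) : PowerSeries ℂ) * f k) :=
              Finset.sum_congr rfl fun i _ => Finset.smul_sum
          _ = ∑ k, ∑ i ∈ A, g i • (((p i k : Polynomial ℂ) : PowerSeries ℂ) * f k) :=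
              Finset.sum_comm
          _ = ∑ k, (polyToPS (∑ i ∈ A, g i • p i k)) * f k := by
              refine Finset.sum_congr rfl fun k _ => ?_
              rw [map_sum, Finset.sum_mul]
              refine Finset.sum_congr rfl fun i _ => ?_
              rw [map_smul, smul_mul_assoc]
              rfl
      rw [heq2]
      simp [hpoly]
    -- the sum of the functions
    set Gt : ℂ → ℂ := fun w => ∑ i ∈ A, g i * G i w with hGt
    -- Gt vanishes near 0
    have hGt0 : ∀ᶠ z in nhds (0 : ℂ), Gt z = 0 := by
      have hall : ∀ᶠ z in nhds (0 : ℂ), ∀ i ∈ A, HasSum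
          (fun n : ℕ => PowerSeries.coeff n
            (∑ k, ((p i k : Polynomial ℂ) : PowerSeries ℂ) * f k) * z ^ n) (G i z) :=
        eventually_all_finset A |>.mpr (fun i _ => hrep i)
      filter_upwards [hall] with z hz
      have hsum : HasSum (fun n : ℕ => ∑ i ∈ A, g i *
          (PowerSeries.coeff n (∑ k, ((p i k : Polynomial ℂ) : PowerSeries ℂ) * f k) * z ^ n))
          (Gt z) :=
        hasSum_sum fun i hi => (hz i hi).mul_left (g i)
      have hzero : (fun n : ℕ => ∑ i ∈ A, g i *
          (PowerSeries.coeff n (∑ k, ((p i k : Polynomial ℂ) : PowerSeries ℂ) * f k) * z ^ n))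
          = fun _ => 0 := by
        funext n
        have : ∑ i ∈ A, g i * PowerSeries.coeff n
            (∑ k, ((p i k : Polynomial ℂ) : PowerSeries ℂ) * f k) = 0 := by
          have := congrArg (PowerSeries.coeff n) hPS
          simpa [map_sum, PowerSeries.coeff_smul, smul_eq_mul] using this
        calc ∑ i ∈ A, g i * (PowerSeries.coeff n
              (∑ k, ((p i k : Polynomial ℂ) : PowerSeries ℂ) * f k) * z ^ n)
            = (∑ i ∈ A, g i * PowerSeries.coeff n
              (∑ k, ((p i k : Polynomial ℂ) : PowerSeries ℂ) * f k)) * z ^ n := by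
              rw [Finset.sum_mul]; simp only [mul_assoc]
          _ = 0 := by rw [this, zero_mul]
      rw [hzero] at hsum
      exact (hasSum_zero.unique hsum).symm
    -- each active pole has modulus ≥ r
    have hmod : ∀ i ∈ A, r ≤ ‖(i : (_ : ℂ) × ℕ).1‖ := fun i hi => himin i hi
    -- Gt is analytic on the open ball of radius r
    have hGtana : AnalyticOnNhd ℂ Gt (Metric.ball (0 : ℂ) r) := by
      intro w hw
      refine Finset.analyticAt_fun_sum A fun i hi => ?_
      have hwmem : w ∈ Metric.closedBall (0 : ℂ) ‖(i : (_ : ℂ) × ℕ).1‖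
          \ {(i : (_ : ℂ) × ℕ).1} := by
        constructor
        · rw [Metric.mem_closedBall, Complex.dist_eq, sub_zero]
          exact le_trans (le_of_lt (mem_ball_zero_iff.mp hw)) (hmod i hi)
        · intro hww
          rw [Set.mem_singleton_iff] at hww
          rw [mem_ball_zero_iff] at hw
          have h3 : r ≤ ‖w‖ := hww ▸ hmod i hi
          exact absurd hw (not_lt.mpr h3)
      exact analyticAt_const.mul (hana i w hwmem)
    -- identity theorem: Gt = 0 on ball 0 r
    have hGtzero : Set.EqOn Gt 0 (Metric.ball (0 : ℂ) r) := by
      refine hGtana.eqOn_zero_of_preconnected_of_eventuallyEq_zero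
        (convex_ball (0 : ℂ) r).isPreconnected (Metric.mem_ball_self hrpos) ?_
      exact hGt0
    -- the filter approaching ζ0 from inside the ball
    set l : Filter ℂ := nhdsWithin ζ0 (Metric.ball (0 : ℂ) r) with hl
    have hlne : l.NeBot := by
      rw [hl, ← mem_closure_iff_nhdsWithin_neBot, closure_ball (0 : ℂ) (ne_of_gt hrpos),
        Metric.mem_closedBall, Complex.dist_eq, sub_zero]
    have hballsub : Metric.ball (0 : ℂ) r ⊆ {ζ0}ᶜ := by
      intro w hw hww
      rw [Set.mem_singleton_iff] at hww
      rw [mem_ball_zero_iff, hww] at hw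
      exact absurd hw (lt_irrefl r)
    have hle : l ≤ nhdsWithin ζ0 {ζ0}ᶜ := nhdsWithin_mono _ hballsub
    -- limits of the individual terms
    obtain ⟨Hst, hHana, hHne, hHeq⟩ := hpole istar
    -- limit of each term of Gt w * (w - ζ0)^sstar
    have hterm : ∀ i ∈ A, Filter.Tendsto (fun w => g i * G i w * (w - ζ0) ^ sstar) l
        (nhds (if (i : (_ : ℂ) × ℕ).1 = ζ0
          then g i * (Classical.choose (hpole i)) ζ0 * (0 : ℂ) ^ (sstar - (i : (_ : ℂ) × ℕ).2)
          else g i * G i ζ0 * (0 : ℂ) ^ sstar)) := by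
      intro i hi
      by_cases hcase : (i : (_ : ℂ) × ℕ).1 = ζ0
      · rw [if_pos hcase]
        set Hi := Classical.choose (hpole i) with hHi
        obtain ⟨hHiana, hHine, hHieq⟩ := Classical.choose_spec (hpole i)
        have hsle : (i : (_ : ℂ) × ℕ).2 ≤ sstar := by
          refine histar i ?_
          rw [hA0, Finset.mem_filter]
          exact ⟨hi, hcase⟩
        simp only [hcase] at hHieq
        have heq : ∀ᶠ w in l, g i * G i w * (w - ζ0) ^ sstar
            = g i * Hi w * (w - ζ0) ^ (sstar - (i : (_ : ℂ) × ℕ).2) := by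
          have h1 : ∀ᶠ w in l, G i w = Hi w / (w - ζ0) ^ (i : (_ : ℂ) × ℕ).2 := hle hHieq
          have h2 : ∀ᶠ w in l, w ∈ Metric.ball (0 : ℂ) r := eventually_mem_nhdsWithin
          filter_upwards [h1, h2] with w hw1 hw2
          have hwne : w - ζ0 ≠ 0 := sub_ne_zero.mpr (fun h => hballsub hw2 (h ▸ rfl))
          have hane : (w - ζ0) ^ (i : (_ : ℂ) × ℕ).2 ≠ 0 := pow_ne_zero _ hwne
          rw [hw1, show sstar = (i : (_ : ℂ) × ℕ).2 + (sstar - (i : (_ : ℂ) × ℕ).2) from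
            (Nat.add_sub_cancel' hsle).symm, pow_add]
          field_simp
          rw [Nat.add_sub_cancel_left]
        rw [Filter.tendsto_congr' heq]
        have : Filter.Tendsto (fun w => g i * Hi w * (w - ζ0) ^ (sstar - (i : (_ : ℂ) × ℕ).2))
            (nhds ζ0) (nhds (g i * Hi ζ0 * (ζ0 - ζ0) ^ (sstar - (i : (_ : ℂ) × ℕ).2))) := by
          refine Filter.Tendsto.mul (Filter.Tendsto.mul tendsto_const_nhds ?_) ?_
          · have hHiana' : AnalyticAt ℂ Hi ζ0 := by rw [← hcase]; exact hHiana
            exact hHiana'.continuousAt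
          · exact ((continuous_id.sub continuous_const).pow _).continuousAt
        rw [sub_self] at this
        exact this.mono_left nhdsWithin_le_nhds
      · rw [if_neg hcase]
        have hGiana : AnalyticAt ℂ (G i) ζ0 := by
          have hwmem : ζ0 ∈ Metric.closedBall (0 : ℂ) ‖(i : (_ : ℂ) × ℕ).1‖
              \ {(i : (_ : ℂ) × ℕ).1} := by
            constructor
            · rw [Metric.mem_closedBall, Complex.dist_eq, sub_zero]
              exact hmod i hi
            · exact fun h => hcase (Set.mem_singleton_iff.mp h).symm
          exact hana i ζ0 hwmem
        have : Filter.Tendsto (fun w => g i * G i w * (w - ζ0) ^ sstar)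
            (nhds ζ0) (nhds (g i * G i ζ0 * (ζ0 - ζ0) ^ sstar)) := by
          refine Filter.Tendsto.mul (Filter.Tendsto.mul tendsto_const_nhds ?_) ?_
          · exact hGiana.continuousAt
          · exact ((continuous_id.sub continuous_const).pow _).continuousAt
        rw [sub_self] at this
        exact this.mono_left nhdsWithin_le_nhds
    -- total limit
    have htot : Filter.Tendsto (fun w => Gt w * (w - ζ0) ^ sstar) l
        (nhds (∑ i ∈ A, if (i : (_ : ℂ) × ℕ).1 = ζ0
          then g i * (Classical.choose (hpole i)) ζ0 * (0 : ℂ) ^ (sstar - (i : (_ : ℂ) × ℕ).2)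
          else g i * G i ζ0 * (0 : ℂ) ^ sstar)) := by
      have := tendsto_finset_sum A hterm
      refine this.congr fun w => ?_
      rw [hGt, Finset.sum_mul]
    -- the limit value equals g istar * Hst ζ0
    have hval : (∑ i ∈ A, if (i : (_ : ℂ) × ℕ).1 = ζ0
        then g i * (Classical.choose (hpole i)) ζ0 * (0 : ℂ) ^ (sstar - (i : (_ : ℂ) × ℕ).2)
        else g i * G i ζ0 * (0 : ℂ) ^ sstar)
        = g istar * (Classical.choose (hpole istar)) ζ0 := by
      rw [Finset.sum_eq_single istar]
      · rw [if_pos hζstar, hsstar, Nat.sub_self, pow_zero, mul_one]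
      · intro i hi hine
        by_cases hcase : (i : (_ : ℂ) × ℕ).1 = ζ0
        · rw [if_pos hcase]
          have hsle : (i : (_ : ℂ) × ℕ).2 ≤ sstar := histar i (by
            rw [hA0, Finset.mem_filter]; exact ⟨hi, hcase⟩)
          have hsne : (i : (_ : ℂ) × ℕ).2 ≠ sstar := by
            intro h
            apply hine
            apply Subtype.ext
            have h1 : (i : (_ : ℂ) × ℕ).1 = (istar : (_ : ℂ) × ℕ).1 := hcase.trans hζstar.symm
            have h2 : (i : (_ : ℂ) × ℕ).2 = (istar : (_ : ℂ) × ℕ).2 := h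
            exact Sigma.ext h1 (by rw [h2])
          rw [zero_pow (by omega : sstar - (i : (_ : ℂ) × ℕ).2 ≠ 0), mul_zero]
        · rw [if_neg hcase, zero_pow (by omega), mul_zero]
      · intro h; exact absurd histarA h
    rw [hval] at htot
    -- but the function is eventually zero on l
    have hzero : Filter.Tendsto (fun w => Gt w * (w - ζ0) ^ sstar) l (nhds 0) := by
      have h0 : (fun w => Gt w * (w - ζ0) ^ sstar) =ᶠ[l] fun _ => (0 : ℂ) := by
        filter_upwards [eventually_mem_nhdsWithin] with w hw
        have := hGtzero hw
        simp only [Pi.zero_apply] at this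
        rw [this, zero_mul]
      exact Filter.Tendsto.congr' h0.symm tendsto_const_nhds
    have := tendsto_nhds_unique htot hzero
    -- Hst is the chosen H for istar
    have hHstval : (Classical.choose (hpole istar)) ζ0 ≠ 0 := by
      have hspec := Classical.choose_spec (hpole istar)
      exact hζstar ▸ hspec.2.1
    exact absurd this (mul_ne_zero hgstar hHstval)
  -- dimension count
  have hcard : Fintype.card T ≤ Module.finrank ℂ (∀ k : Fin d, Polynomial.degreeLT ℂ (m k)) :=
    hli.fintype_card_le_finrank
  have hfin : Module.finrank ℂ (∀ k : Fin d, Polynomial.degreeLT ℂ (m k)) = ∑ k, m k := by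
    rw [Module.finrank_pi_fintype]
    refine Finset.sum_congr rfl fun k _ => ?_
    rw [(Polynomial.degreeLTEquiv ℂ (m k)).finrank_eq, Module.finrank_fin_fun]
  have hcard2 : Fintype.card T = ∑ ζ ∈ S, τ ζ := by
    rw [Fintype.card_coe, hT, Finset.card_sigma]
    refine Finset.sum_congr rfl fun ζ _ => ?_
    rw [Nat.card_Icc]
    omega
  omega
end
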